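/- Let m ≥ 0, let λ ∉ σ(D₀), and let k be the unique point with 0 < |k| < 1 and λ² = m² + 2 − k − k⁻¹. Then for every j ∈ ℤ one has |T_j(k)|_HS ≤ (|C_j(k)| / |k⁻¹ − k|) · (|λ − m| + |λ + m|), where |C₀(k)| = 1 and |C_j(k)| = |k|^{|j| − 1/2} for j ≠ 0, and |·|_HS denotes the Hilbert–Schmidt (Frobenius) norm of a 2×2 matrix. -/

import Mathlib

open scoped ComplexOrder
open Matrix

noncomputable section

abbrev Mat2 : Type := Matrix (Fin 2) (Fin 2) ℂ
abbrev Vec2 : Type := EuclideanSpace ℂ (Fin 2)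
abbrev Hsp : Type := lp (fun _ : ℤ => Vec2) 2

/-- A `2×2` complex matrix acting on `ℂ²` as a continuous linear map. -/
def mAct (A : Mat2) : Vec2 →L[ℂ] Vec2 := Matrix.toEuclideanCLM (𝕜 := ℂ) A

/-- The spectral (operator) norm of a `2×2` complex matrix. -/
def specNorm (A : Mat2) : ℝ := ‖mAct A‖

/-- The Hilbert–Schmidt (Frobenius) norm of a `2×2` complex matrix. -/
def hsNorm (A : Mat2) : ℝ := Real.sqrt (∑ i, ∑ j, ‖A i j‖ ^ 2)

def bMat (m : ℝ) : Mat2 := !![(-m : ℂ), 1; 1, (m : ℂ)]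

def aMat : Mat2 := !![0, 0; -1, 0]

/-- `D0` is the free discrete Dirac operator with mass `m`. -/
def IsFreeDirac (m : ℝ) (D0 : Hsp →L[ℂ] Hsp) : Prop :=
  ∀ u : Hsp, ∀ n : ℤ,
    (D0 u) n = mAct aMat.transpose (u (n - 1)) + mAct (bMat m) (u n) + mAct aMat (u (n + 1))

/-- `Vop` is the block-diagonal operator with blocks `υ n`. -/
def IsBlockDiagOp (υ : ℤ → Mat2) (Vop : Hsp →L[ℂ] Hsp) : Prop :=
  ∀ u : Hsp, ∀ n : ℤ, (Vop u) n = mAct (υ n) (u n)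

/-- The spectrum `[−√(m²+4), −m] ∪ [m, √(m²+4)]` as a subset of `ℂ`. -/
def sigma0 (m : ℝ) : Set ℂ :=
  Complex.ofReal '' (Set.Icc (-Real.sqrt (m ^ 2 + 4)) (-m) ∪ Set.Icc m (Real.sqrt (m ^ 2 + 4)))

def T0mat (m : ℝ) (lam k : ℂ) : Mat2 :=
  (k⁻¹ - k)⁻¹ • !![lam - m, 1 - k; 1 - k, lam + m]

def T1mat (m : ℝ) (lam k : ℂ) : Mat2 :=
  (k * (k⁻¹ - k)⁻¹) • !![lam - m, 1 - k; 1 - k⁻¹, lam + m]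

def Tmat (m : ℝ) (lam k : ℂ) : ℤ → Mat2 := fun j =>
  if j = 0 then T0mat m lam k
  else if 0 < j then k ^ (j.toNat - 1) • T1mat m lam k
  else (k ^ ((-j).toNat - 1) • T1mat m lam k).transpose

/-- The positive semidefinite square root (removed from Mathlib; old definition restored). -/
def Matrix.PosSemidef.sqrt {n : Type*} [Fintype n] [DecidableEq n] {𝕜 : Type*} [RCLike 𝕜]
    {A : Matrix n n 𝕜} (hA : A.PosSemidef) : Matrix n n 𝕜 :=
  hA.1.eigenvectorUnitary.1 * diagonal ((↑) ∘ (√·) ∘ hA.1.eigenvalues) *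
    (star hA.1.eigenvectorUnitary : Matrix n n 𝕜)

theorem Matrix.PosSemidef.posSemidef_sqrt {n : Type*} [Fintype n] [DecidableEq n] {𝕜 : Type*}
    [RCLike 𝕜] {A : Matrix n n 𝕜} (hA : A.PosSemidef) : hA.sqrt.PosSemidef := by
  unfold Matrix.PosSemidef.sqrt
  rw [star_eq_conjTranspose]
  refine Matrix.PosSemidef.mul_mul_conjTranspose_same ?_ _
  refine (Matrix.posSemidef_diagonal_iff).2 fun i => ?_
  simp only [Function.comp_apply, RCLike.ofReal_nonneg]
  exact Real.sqrt_nonneg _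

def wMat (υ : ℤ → Mat2) (n : ℤ) : Mat2 :=
  (Matrix.posSemidef_conjTranspose_mul_self (υ n)).sqrt

def sqrtwMat (υ : ℤ → Mat2) (n : ℤ) : Mat2 :=
  (Matrix.posSemidef_conjTranspose_mul_self (υ n)).posSemidef_sqrt.sqrt

/-- The Birman–Schwinger operator `K(z) = √W (D₀ − z)⁻¹ U √W`. -/
def Kop (D0 sW Uop : Hsp →L[ℂ] Hsp) (z : ℂ) : Hsp →L[ℂ] Hsp :=
  sW * Ring.inverse (D0 - z • (1 : Hsp →L[ℂ] Hsp)) * Uop * sW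

/-- The element of `ℓ²(ℤ, ℂ²)` supported at site `j` equal to the `β`-th standard basis vector. -/
def deltaVec (j : ℤ) (β : Fin 2) : Hsp := lp.single 2 j (EuclideanSpace.single β (1 : ℂ))


/-- The constant `C_j(k)`:  `1` for `j = 0` and `|k|^{|j| − 1/2}` for `j ≠ 0`. -/
def CFun (k : ℂ) (j : ℤ) : ℝ :=
  if j = 0 then 1 else ‖k‖ ^ ((j.natAbs : ℝ) - 1 / 2)

lemma hsNorm_smul_of (s p q r t : ℂ) :
    hsNorm (s • !![p,q;r,t]) = ‖s‖ *
      Real.sqrt (‖p‖^2 + ‖q‖^2 + ‖r‖^2 + ‖t‖^2) := by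
  unfold hsNorm
  simp only [Fin.sum_univ_two, Matrix.smul_apply, smul_eq_mul, norm_mul, mul_pow]
  norm_num [Matrix.cons_val_zero, Matrix.cons_val_one, Matrix.head_cons]
  rw [show ‖s‖ ^2 * ‖p‖^2 + ‖s‖^2*‖q‖^2 +
      (‖s‖^2*‖r‖^2 + ‖s‖^2*‖t‖^2) =
      ‖s‖ ^2 * (‖p‖^2 + ‖q‖^2 + ‖r‖^2 + ‖t‖^2) by ring,
    Real.sqrt_mul (sq_nonneg _), Real.sqrt_sq (norm_nonneg s)]

lemma hsNorm_transpose (A : Mat2) : hsNorm A.transpose = hsNorm A := by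
  unfold hsNorm
  congr 1
  rw [Finset.sum_comm]
  simp [Matrix.transpose_apply]


lemma keyT1 (m : ℝ) (lam k : ℂ) (hk0 : 0 < ‖k‖) (hk1 : ‖k‖ < 1)
    (hrel : lam ^ 2 = (m : ℂ) ^ 2 + 2 - k - k⁻¹) (n : ℕ) :
    hsNorm (k ^ n • T1mat m lam k) ≤
      ‖k‖ ^ ((n + 1 : ℝ) - 1/2) / ‖k⁻¹ - k‖ *
        (‖lam - (m : ℂ)‖ + ‖lam + (m : ℂ)‖) := by
  have hk : k ≠ 0 := by simpa using hk0.ne'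
  set K := ‖k‖ with hK
  set a := ‖lam - (m : ℂ)‖ with ha
  set b := ‖lam + (m : ℂ)‖ with hb
  set c := ‖1 - k‖ with hc
  set c' := ‖1 - k⁻¹‖ with hc'
  have ha0 : 0 ≤ a := norm_nonneg _
  have hb0 : 0 ≤ b := norm_nonneg _
  have hd : k⁻¹ - k ≠ 0 := by
    intro h
    have h2 : k^2 = 1 := by
      have := sub_eq_zero.mp h
      field_simp at this
      linear_combination -this
    have : K ^ 2 = 1 := by rw [hK, ← norm_pow, h2, norm_one]
    nlinarith
  set D := ‖k⁻¹ - k‖ with hD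
  have hD0 : 0 < D := by simpa [hD] using hd
  -- key algebraic identities
  have h4 : c ^ 2 = K * (a * b) := by
    have h1 : (1 - k)^2 = -(k * ((lam - (m:ℂ)) * (lam + m))) := by
      have h2 : k * k⁻¹ = 1 := mul_inv_cancel₀ hk
      linear_combination k * hrel - h2
    calc c ^ 2 = ‖(1-k)^2‖ := by rw [hc, norm_pow]
      _ = ‖k * ((lam - (m:ℂ)) * (lam + m))‖ := by rw [h1, norm_neg]
      _ = K * (a * b) := by rw [norm_mul, norm_mul]
  have hcc' : c = K * c' := by
    rw [hc, hc', show (1 - k⁻¹) = (k - 1) * k⁻¹ by field_simp, norm_mul, norm_inv,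
      ← norm_neg (k-1)]
    rw [neg_sub]
    field_simp
    rfl
  have h3 : K * c' ^ 2 = a * b := by
    have : K * (K * c'^2) = K * (a * b) := by
      rw [← h4, hcc']; ring
    exact mul_left_cancel₀ hk0.ne' this
  -- rewrite the left-hand side
  have hLHS : hsNorm (k ^ n • T1mat m lam k) =
      K ^ n * (K * D⁻¹) * Real.sqrt (a^2 + c^2 + c'^2 + b^2) := by
    rw [T1mat, smul_smul, hsNorm_smul_of, norm_mul, norm_pow, norm_mul, norm_inv]
  rw [hLHS]
  -- squares
  have hKsq : K^2 < 1 := by nlinarith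
  have hS : K * (a^2 + c^2 + c'^2 + b^2) ≤ (a+b)^2 := by
    have hKS : K * (a^2 + c^2 + c'^2 + b^2) = K*a^2 + K^2*(a*b) + a*b + K*b^2 := by
      linear_combination K * h4 + h3
    rw [hKS]
    nlinarith [mul_nonneg (sub_nonneg.2 hk1.le) (add_nonneg (sq_nonneg a) (sq_nonneg b)),
      mul_nonneg (sub_nonneg.2 hKsq.le) (mul_nonneg ha0 hb0)]
  have hr2 : (K ^ ((n + 1 : ℝ) - 1/2))^2 = K^(2*n+1) := by
    rw [← Real.rpow_natCast K (2*n+1), ← Real.rpow_natCast (K ^ ((n+1:ℝ)-1/2)) 2,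
      ← Real.rpow_mul hk0.le]
    congr 1
    push_cast
    ring
  have hcoef : 0 ≤ K ^ n * (K * D⁻¹) := by positivity
  have hRHS0 : 0 ≤ K ^ ((n + 1 : ℝ) - 1/2) / D * (a + b) := by
    have := Real.rpow_nonneg hk0.le ((n + 1 : ℝ) - 1/2)
    positivity
  calc K ^ n * (K * D⁻¹) * Real.sqrt (a^2 + c^2 + c'^2 + b^2)
      = Real.sqrt ((K ^ n * (K * D⁻¹))^2 * (a^2 + c^2 + c'^2 + b^2)) := by
        rw [Real.sqrt_mul (sq_nonneg _), Real.sqrt_sq hcoef]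
    _ ≤ Real.sqrt ((K ^ ((n + 1 : ℝ) - 1/2) / D * (a + b))^2) := by
        apply Real.sqrt_le_sqrt
        calc (K ^ n * (K * D⁻¹))^2 * (a^2 + c^2 + c'^2 + b^2)
            = (K^n)^2 * K / D^2 * (K * (a^2 + c^2 + c'^2 + b^2)) := by
              field_simp
          _ ≤ (K^n)^2 * K / D^2 * (a+b)^2 := by
              apply mul_le_mul_of_nonneg_left hS (by positivity)
          _ = (K ^ ((n + 1 : ℝ) - 1/2) / D * (a + b))^2 := by
              rw [mul_pow, div_pow, hr2]
              ring
    _ = K ^ ((n + 1 : ℝ) - 1/2) / D * (a + b) := Real.sqrt_sq hRHS0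

lemma keyT0 (m : ℝ) (lam k : ℂ) (hk0 : 0 < ‖k‖) (hk1 : ‖k‖ < 1)
    (hrel : lam ^ 2 = (m : ℂ) ^ 2 + 2 - k - k⁻¹) :
    hsNorm (T0mat m lam k) ≤
      1 / ‖k⁻¹ - k‖ *
        (‖lam - (m : ℂ)‖ + ‖lam + (m : ℂ)‖) := by
  have hk : k ≠ 0 := by simpa using hk0.ne'
  set K := ‖k‖ with hK
  set a := ‖lam - (m : ℂ)‖ with ha
  set b := ‖lam + (m : ℂ)‖ with hb
  set c := ‖1 - k‖ with hc
  have ha0 : 0 ≤ a := norm_nonneg _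
  have hb0 : 0 ≤ b := norm_nonneg _
  have h4 : c ^ 2 = K * (a * b) := by
    have h1 : (1 - k)^2 = -(k * ((lam - (m:ℂ)) * (lam + m))) := by
      have h2 : k * k⁻¹ = 1 := mul_inv_cancel₀ hk
      linear_combination k * hrel - h2
    calc c ^ 2 = ‖(1-k)^2‖ := by rw [hc, norm_pow]
      _ = ‖k * ((lam - (m:ℂ)) * (lam + m))‖ := by rw [h1, norm_neg]
      _ = K * (a * b) := by rw [norm_mul, norm_mul]
  have hLHS : hsNorm (T0mat m lam k) =
      ‖(k⁻¹ - k)⁻¹‖ * Real.sqrt (a^2 + c^2 + c^2 + b^2) := by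
    rw [T0mat, hsNorm_smul_of]
  rw [hLHS, norm_inv]
  rw [one_div]
  apply mul_le_mul_of_nonneg_left _ (by positivity)
  have : a^2 + c^2 + c^2 + b^2 ≤ (a+b)^2 := by
    nlinarith [mul_nonneg ha0 hb0, mul_nonneg (mul_nonneg ha0 hb0) (sub_nonneg.2 hk1.le)]
  calc Real.sqrt (a^2 + c^2 + c^2 + b^2) ≤ Real.sqrt ((a+b)^2) := Real.sqrt_le_sqrt this
    _ = a + b := Real.sqrt_sq (by positivity)

/-- Estimate of the Hilbert–Schmidt norms of the resolvent blocks: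
`|T_j(k)|_HS ≤ (|C_j(k)| / |k⁻¹ − k|) (|λ − m| + |λ + m|)`. -/
theorem stmt7 (m : ℝ) (hm : 0 ≤ m) (lam k : ℂ) (hlam : lam ∉ sigma0 m)
    (hk0 : 0 < ‖k‖) (hk1 : ‖k‖ < 1)
    (hrel : lam ^ 2 = (m : ℂ) ^ 2 + 2 - k - k⁻¹) (j : ℤ) :
    hsNorm (Tmat m lam k j) ≤
      |CFun k j| / ‖k⁻¹ - k‖ *
        (‖lam - (m : ℂ)‖ + ‖lam + (m : ℂ)‖) := by
  rcases eq_or_ne j 0 with rfl | h0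
  · have h := keyT0 m lam k hk0 hk1 hrel
    simpa [Tmat, CFun] using h
  · have habs : |CFun k j| = ‖k‖ ^ ((j.natAbs : ℝ) - 1 / 2) := by
      rw [CFun, if_neg h0, abs_of_nonneg (Real.rpow_nonneg hk0.le _)]
    rcases h0.lt_or_gt with hneg | hpos
    · have hT : Tmat m lam k j = (k ^ ((-j).toNat - 1) • T1mat m lam k).transpose := by
        simp only [Tmat, if_neg h0, if_neg (not_lt.2 hneg.le)]
      rw [hT, hsNorm_transpose, habs]
      have hnat : ((((-j).toNat - 1 : ℕ) : ℝ) + 1) = (j.natAbs : ℝ) := by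
        have h' : ((-j).toNat - 1) + 1 = j.natAbs := by omega
        exact_mod_cast h'
      have h := keyT1 m lam k hk0 hk1 hrel ((-j).toNat - 1)
      rwa [hnat] at h
    · have hT : Tmat m lam k j = k ^ (j.toNat - 1) • T1mat m lam k := by
        simp only [Tmat, if_neg h0, if_pos hpos]
      rw [hT, habs]
      have hnat : (((j.toNat - 1 : ℕ) : ℝ) + 1) = (j.natAbs : ℝ) := by
        have h' : (j.toNat - 1) + 1 = j.natAbs := by omega
        exact_mod_cast h'
      have h := keyT1 m lam k hk0 hk1 hrel (j.toNat - 1)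
      rwa [hnat] at h
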